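/- arXiv:2312.07456 — 6 statements merged into one kernel-verified Lean document; each statement's English description precedes it below -/
import Mathlib

section
/- Let (K, δ) be a differential field of characteristic 0, and let f ∈ K{x} be a differential polynomial of order n with f = gh where g, h are non-unit differential polynomials. If ā ∈ K^{n+1} satisfies f_alg(ā) = 0 and s(f)_alg(ā) ≠ 0 (where s(f) is the separant ∂f/∂x^{(n)}), then exactly one of the following holds: (i) g_alg(ā) = 0, h_alg(ā) ≠ 0, s(g)_alg(ā) ≠ 0 and ord(g) = n; or (ii) h_alg(ā) = 0, g_alg(ā) ≠ 0, s(h)_alg(ā) ≠ 0 and ord(h) = n. -/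
/-!
STATEMENT 0. The differential polynomial ring `K{x}` is modelled as `MvPolynomial ℕ K`,
where the variable `X i` stands for `x^(i)`.  The order of a differential polynomial is
the largest `i` such that `X i` occurs, i.e. `f.vars.sup id`.  `f_alg(ā)` is
`MvPolynomial.eval a f` for a tuple `a : ℕ → K`, and the separant `s(f)` is
`pderiv (ord f) f`.
-/

open MvPolynomial

/-- The order of a differential polynomial: the largest variable occurring in it. -/
noncomputable def dpOrder {K : Type*} [CommRing K] (f : MvPolynomial ℕ K) : ℕ :=
  f.vars.sup id

section Aux
variable {R : Type*} [CommRing R] [IsDomain R]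

lemma mem_vars_iff_degreeOf_pos {σ : Type*} {R : Type*} [CommSemiring R]
    (i : σ) (p : MvPolynomial σ R) : i ∈ p.vars ↔ 0 < degreeOf i p := by
  simp [mem_vars, degreeOf_eq_sup, Finset.lt_sup_iff, Finsupp.mem_support_iff,
    pos_iff_ne_zero]

lemma degreeOf_zero_le_mul_fin {m : ℕ} (P Q : MvPolynomial (Fin (m + 1)) R)
    (hP : P ≠ 0) (hQ : Q ≠ 0) :
    degreeOf 0 P ≤ degreeOf 0 (P * Q) := by
  have hP' : finSuccEquiv R m P ≠ 0 := by
    simpa using (AlgEquiv.injective (finSuccEquiv R m)).ne_iff.mpr hP |>.trans_eq (map_zero _)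
  have hQ' : finSuccEquiv R m Q ≠ 0 := by
    simpa using (AlgEquiv.injective (finSuccEquiv R m)).ne_iff.mpr hQ |>.trans_eq (map_zero _)
  rw [← natDegree_finSuccEquiv, ← natDegree_finSuccEquiv, map_mul,
    Polynomial.natDegree_mul hP' hQ']
  exact Nat.le_add_right _ _

lemma degreeOf_le_mul_fintype {σ : Type*} [Fintype σ] [DecidableEq σ]
    (i : σ) (P Q : MvPolynomial σ R) (hP : P ≠ 0) (hQ : Q ≠ 0) :
    degreeOf i P ≤ degreeOf i (P * Q) := by
  obtain ⟨m, hm⟩ : ∃ m, Fintype.card σ = m + 1 :=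
    ⟨Fintype.card σ - 1, (Nat.succ_pred_eq_of_pos (Fintype.card_pos_iff.mpr ⟨i⟩)).symm⟩
  let e : σ ≃ Fin (m + 1) := (Fintype.equivFinOfCardEq hm).trans
    (Equiv.swap ((Fintype.equivFinOfCardEq hm) i) 0)
  have hei : e i = 0 := by simp [e]
  have h1 : degreeOf i P = degreeOf 0 (rename e P) := by
    rw [← hei, degreeOf_rename_of_injective e.injective]
  have h2 : degreeOf i (P * Q) = degreeOf 0 (rename e (P * Q)) := by
    rw [← hei, degreeOf_rename_of_injective e.injective]
  rw [h1, h2, map_mul]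
  exact degreeOf_zero_le_mul_fin _ _
    (by simpa using (rename_injective e e.injective).ne_iff.mpr hP |>.trans_eq (map_zero _))
    (by simpa using (rename_injective e e.injective).ne_iff.mpr hQ |>.trans_eq (map_zero _))

lemma degreeOf_le_mul {σ : Type*} (i : σ) (p q : MvPolynomial σ R)
    (hp : p ≠ 0) (hq : q ≠ 0) : degreeOf i p ≤ degreeOf i (p * q) := by
  classical
  obtain ⟨s, p', q', rfl, rfl⟩ := exists_finset_rename₂ p q
  by_cases hi : i ∈ s
  · rw [← map_mul, show i = ((⟨i, hi⟩ : s) : σ) from rfl,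
      degreeOf_rename_of_injective Subtype.val_injective,
      degreeOf_rename_of_injective Subtype.val_injective]
    exact degreeOf_le_mul_fintype _ p' q'
      (fun h0 => hp (by rw [h0, map_zero]))
      (fun h0 => hq (by rw [h0, map_zero]))
  · have : i ∉ ((rename (Subtype.val : {x // x ∈ s} → σ)) p').vars := by
      intro hmem
      obtain ⟨j, _, rfl⟩ := Finset.mem_image.mp (vars_rename _ _ hmem)
      exact hi j.2
    have h0 : degreeOf i ((rename (Subtype.val : {x // x ∈ s} → σ)) p') = 0 := by
      by_contra hne
      exact this ((mem_vars_iff_degreeOf_pos _ _).mpr (Nat.pos_of_ne_zero hne))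
    rw [h0]; exact Nat.zero_le _

lemma vars_subset_mul_left {σ : Type*} (p q : MvPolynomial σ R) (hq : q ≠ 0) :
    p.vars ⊆ (p * q).vars := by
  intro i hi
  have hp : p ≠ 0 := fun h0 => by simp [h0] at hi
  rw [mem_vars_iff_degreeOf_pos] at hi ⊢
  exact lt_of_lt_of_le hi (degreeOf_le_mul i p q hp hq)

end Aux

theorem statement0 {K : Type*} [Field K] [CharZero K]
    (δ : K → K) (hδadd : ∀ x y, δ (x + y) = δ x + δ y)
    (hδmul : ∀ x y, δ (x * y) = δ x * y + x * δ y)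
    (f g h : MvPolynomial ℕ K) (n : ℕ) (hn : dpOrder f = n)
    (hfgh : f = g * h) (hg : ¬ IsUnit g) (hh : ¬ IsUnit h)
    (a : ℕ → K) (hfa : eval a f = 0) (hsf : eval a (pderiv n f) ≠ 0) :
    Xor'
      (eval a g = 0 ∧ eval a h ≠ 0 ∧ eval a (pderiv n g) ≠ 0 ∧ dpOrder g = n)
      (eval a h = 0 ∧ eval a g ≠ 0 ∧ eval a (pderiv n h) ≠ 0 ∧ dpOrder h = n) := by
  have hf0 : f ≠ 0 := by rintro rfl; simp at hsf
  have hg0 : g ≠ 0 := by rintro rfl; exact hf0 (by rw [hfgh, zero_mul])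
  have hh0 : h ≠ 0 := by rintro rfl; exact hf0 (by rw [hfgh, mul_zero])
  have hpd : eval a (pderiv n f) =
      eval a (pderiv n g) * eval a h + eval a g * eval a (pderiv n h) := by
    rw [hfgh, pderiv_mul, map_add, eval_mul, eval_mul]
  have hor : eval a g = 0 ∨ eval a h = 0 := by
    have h1 := hfa
    rw [hfgh, eval_mul] at h1
    exact mul_eq_zero.mp h1
  have hnotboth : ¬ (eval a g = 0 ∧ eval a h = 0) := by
    rintro ⟨e1, e2⟩
    exact hsf (by rw [hpd, e1, e2]; ring)
  rcases hor with hge | hhe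
  · have hhne : eval a h ≠ 0 := fun e2 => hnotboth ⟨hge, e2⟩
    have hsg : eval a (pderiv n g) ≠ 0 := by
      intro e
      exact hsf (by rw [hpd, hge, e]; ring)
    have hnvars : n ∈ g.vars := by
      by_contra hnv
      exact hsg (by rw [pderiv_eq_zero_of_notMem_vars hnv, map_zero])
    have hordg : dpOrder g = n := by
      refine le_antisymm (Finset.sup_le fun i hi => ?_) (Finset.le_sup (f := id) hnvars)
    -- i ∈ g.vars → i ≤ n
      have hif : i ∈ f.vars := by
        rw [hfgh]; exact vars_subset_mul_left g h hh0 hi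
      calc (id i : ℕ) ≤ f.vars.sup id := Finset.le_sup hif
        _ = n := hn
    exact Or.inl ⟨⟨hge, hhne, hsg, hordg⟩, fun hB => hhne hB.1⟩
  · have hgne : eval a g ≠ 0 := fun e1 => hnotboth ⟨e1, hhe⟩
    have hsh : eval a (pderiv n h) ≠ 0 := by
      intro e
      exact hsf (by rw [hpd, hhe, e]; ring)
    have hnvars : n ∈ h.vars := by
      by_contra hnv
      exact hsh (by rw [pderiv_eq_zero_of_notMem_vars hnv, map_zero])
    have hordh : dpOrder h = n := by
      refine le_antisymm (Finset.sup_le fun i hi => ?_) (Finset.le_sup (f := id) hnvars)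
      have hif : i ∈ f.vars := by
        rw [hfgh, mul_comm]; exact vars_subset_mul_left h g hg0 hi
      calc (id i : ℕ) ≤ f.vars.sup id := Finset.le_sup hif
        _ = n := hn
    exact Or.inr ⟨⟨hhe, hgne, hsh, hordh⟩, fun hA => hgne hA.1⟩
end

section
/- Let (K, δ) be a differential field of characteristic 0, f ∈ K{x} a differential polynomial of order n, and ā ∈ K^{n+1} with f_alg(ā) = 0 and s(f)_alg(ā) ≠ 0. Then there is a unique irreducible factor g of f (in the UFD K{x}) such that g_alg(ā) = 0; moreover ord(g) = n and s(g)_alg(ā) ≠ 0. -/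
/-!
STATEMENT 1. `K{x}` is modelled as `MvPolynomial ℕ K` (the variable `X i` stands for
`x^(i)`); the order of `f` is `f.vars.sup id`, `f_alg(ā)` is `MvPolynomial.eval a f`,
and the separant of `f` is `pderiv (ord f) f`.  The unique irreducible factor is unique
up to associates.
-/

open MvPolynomial

lemma auxFin {R : Type*} [CommRing R] [IsDomain R] {m : ℕ} {p q : MvPolynomial (Fin (m+1)) R}
    (hp : p ≠ 0) (hq : q ≠ 0) :
    degreeOf 0 (p * q) = degreeOf 0 p + degreeOf 0 q := by
  have hp' : finSuccEquiv R m p ≠ 0 := by simpa using hp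
  have hq' : finSuccEquiv R m q ≠ 0 := by simpa using hq
  rw [← natDegree_finSuccEquiv, ← natDegree_finSuccEquiv, ← natDegree_finSuccEquiv, map_mul,
    Polynomial.natDegree_mul hp' hq']

lemma memVars_iff_degreeOf_ne_zero {R : Type*} [CommRing R] (i : ℕ) (p : MvPolynomial ℕ R) :
    i ∈ p.vars ↔ degreeOf i p ≠ 0 := by
  rw [vars_def, Multiset.mem_toFinset, degreeOf_def, ← Multiset.count_pos, Nat.pos_iff_ne_zero]

lemma auxNat {R : Type*} [CommRing R] [IsDomain R] (i : ℕ) {p q : MvPolynomial ℕ R}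
    (hp : p ≠ 0) (hq : q ≠ 0) :
    degreeOf i (p * q) = degreeOf i p + degreeOf i q := by
  obtain ⟨s, q₁, q₂, hq₁, hq₂⟩ := exists_finset_rename₂ p q
  by_cases hi : i ∈ s
  · have hcard : s.card = (s.card - 1) + 1 :=
      (Nat.succ_pred_eq_of_pos (Finset.card_pos.mpr ⟨i, hi⟩)).symm
    set m := s.card - 1 with hm
    let e : {x // x ∈ s} ≃ Fin (m+1) := s.equivFin.trans (finCongr hcard)
    let e' : {x // x ∈ s} ≃ Fin (m+1) := e.trans (Equiv.swap (e ⟨i, hi⟩) 0)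
    let fn : Fin (m+1) → ℕ := Subtype.val ∘ e'.symm
    have hfn : Function.Injective fn := Subtype.val_injective.comp e'.symm.injective
    have hfn0 : fn 0 = i := by
      simp only [fn, e', Function.comp_apply, Equiv.symm_trans_apply, Equiv.symm_swap,
        Equiv.swap_apply_right, Equiv.symm_apply_apply]
    have key : ∀ r : MvPolynomial {x // x ∈ s} R,
        rename (Subtype.val) r = rename fn (rename e' r) := by
      intro r
      rw [rename_rename]
      congr 1
      ext x
      simp [fn, Function.comp]
    set P := rename e' q₁
    set Q := rename e' q₂
    have hP : p = rename fn P := by rw [hq₁, key]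
    have hQ : q = rename fn Q := by rw [hq₂, key]
    have hP0 : P ≠ 0 := by rintro h0; apply hp; rw [hP, h0, map_zero]
    have hQ0 : Q ≠ 0 := by rintro h0; apply hq; rw [hQ, h0, map_zero]
    have h1 : degreeOf i (p * q) = degreeOf 0 (P * Q) := by
      rw [hP, hQ, ← map_mul, ← hfn0, degreeOf_rename_of_injective hfn]
    have h2 : degreeOf i p = degreeOf 0 P := by
      rw [hP, ← hfn0, degreeOf_rename_of_injective hfn]
    have h3 : degreeOf i q = degreeOf 0 Q := by
      rw [hQ, ← hfn0, degreeOf_rename_of_injective hfn]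
    rw [h1, h2, h3, auxFin hP0 hQ0]
  · have not_mem : ∀ r : MvPolynomial ℕ R, (∃ t : MvPolynomial {x // x ∈ s} R,
        r = rename (Subtype.val) t) → i ∉ r.vars := by
      rintro r ⟨t, rfl⟩ h
      obtain ⟨x, -, rfl⟩ := Finset.mem_image.mp (vars_rename (Subtype.val) t h)
      exact hi x.2
    have d0 : ∀ r : MvPolynomial ℕ R, i ∉ r.vars → degreeOf i r = 0 := fun r hr => by
      by_contra h; exact hr ((memVars_iff_degreeOf_ne_zero i r).mpr h)
    have hvp := not_mem p ⟨q₁, hq₁⟩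
    have hvq := not_mem q ⟨q₂, hq₂⟩
    have hvpq : i ∉ (p * q).vars := fun h => by
      rcases Finset.mem_union.mp (vars_mul p q h) with h | h
      exacts [hvp h, hvq h]
    rw [d0 _ hvp, d0 _ hvq, d0 _ hvpq]

theorem statement1 {K : Type*} [Field K] [CharZero K]
    (δ : K → K) (hδadd : ∀ x y, δ (x + y) = δ x + δ y)
    (hδmul : ∀ x y, δ (x * y) = δ x * y + x * δ y)
    (f : MvPolynomial ℕ K) (n : ℕ) (hn : dpOrder f = n)
    (a : ℕ → K) (hfa : eval a f = 0) (hsf : eval a (pderiv n f) ≠ 0) :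
    ∃ g : MvPolynomial ℕ K,
      (Irreducible g ∧ g ∣ f ∧ eval a g = 0 ∧ dpOrder g = n ∧
        eval a (pderiv n g) ≠ 0) ∧
      ∀ g' : MvPolynomial ℕ K,
        Irreducible g' → g' ∣ f → eval a g' = 0 → Associated g' g := by
  classical
  have hf0 : f ≠ 0 := by rintro rfl; simp at hsf
  -- there is an irreducible factor vanishing at `a`
  obtain ⟨u, hu⟩ := UniqueFactorizationMonoid.factors_prod hf0
  have hunit : eval a ((u : MvPolynomial ℕ K)) ≠ 0 := (u.isUnit.map (eval a)).ne_zero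
  have h0 : eval a (UniqueFactorizationMonoid.factors f).prod = 0 := by
    have : eval a (UniqueFactorizationMonoid.factors f).prod *
        eval a (u : MvPolynomial ℕ K) = 0 := by rw [← map_mul, hu, hfa]
    rcases mul_eq_zero.mp this with h | h
    · exact h
    · exact absurd h hunit
  have hex : ∃ g ∈ UniqueFactorizationMonoid.factors f, eval a g = 0 := by
    have hmap : (Multiset.map (eval a) (UniqueFactorizationMonoid.factors f)).prod = 0 := by
      rw [← map_multiset_prod, h0]
    rw [Multiset.prod_eq_zero_iff] at hmap
    obtain ⟨g, hg, hg0⟩ := Multiset.mem_map.mp hmap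
    exact ⟨g, hg, hg0⟩
  obtain ⟨g, hgmem, hg0⟩ := hex
  have hgirr : Irreducible g := UniqueFactorizationMonoid.irreducible_of_factor _ hgmem
  obtain ⟨h, hfgh⟩ := UniqueFactorizationMonoid.dvd_of_mem_factors hgmem
  have hg0' : g ≠ 0 := fun e => hf0 (by rw [hfgh, e, zero_mul])
  have hh0 : h ≠ 0 := fun e => hf0 (by rw [hfgh, e, mul_zero])
  have hpd : eval a (pderiv n f) = eval a (pderiv n g) * eval a h := by
    rw [hfgh, pderiv_mul, map_add, map_mul, map_mul, hg0, zero_mul, add_zero]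
  have hsg : eval a (pderiv n g) ≠ 0 := fun e => hsf (by rw [hpd, e, zero_mul])
  have hha : eval a h ≠ 0 := fun e => hsf (by rw [hpd, e, mul_zero])
  have hnd : dpOrder g = n := by
    apply le_antisymm
    · apply Finset.sup_le
      intro i hi
      have hif : i ∈ f.vars := by
        rw [memVars_iff_degreeOf_ne_zero] at hi ⊢
        rw [hfgh, auxNat i hg0' hh0]
        omega
      exact hn ▸ Finset.le_sup (f := id) hif
    · have hpg : pderiv n g ≠ 0 := fun e => hsg (by rw [e, map_zero])
      have hnv : n ∈ g.vars := by
        by_contra hnv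
        exact hpg (pderiv_eq_zero_of_notMem_vars hnv)
      exact Finset.le_sup (f := id) hnv
  refine ⟨g, ⟨hgirr, ⟨h, hfgh⟩, hg0, hnd, hsg⟩, ?_⟩
  intro g' hg'irr hg'dvd hg'0
  by_contra hass
  have hg'prime : Prime g' := UniqueFactorizationMonoid.irreducible_iff_prime.mp hg'irr
  have hdvd : g' ∣ g * h := hfgh ▸ hg'dvd
  rcases hg'prime.2.2 _ _ hdvd with hd | hd
  · exact hass (hg'irr.associated_of_dvd hgirr hd)
  · obtain ⟨t, rfl⟩ := hd
    exact hha (by rw [map_mul, hg'0, zero_mul])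
end

section
/- Let (K, v) ⊆ (L, w) be an unramified extension of valued fields (i.e. vK = wL as subgroups of the value group of w), and let ac : K → Kv be an angular component map on (K, v). Then there is a unique angular component map on (L, w) extending ac. -/
/-!
STATEMENT 4.  Angular component maps.  We use multiplicative valuations; the residue
field of `(K, v)` is `IsLocalRing.ResidueField v.valuationSubring`, and `resOf v` is the
residue map extended by junk value `0` outside the valuation ring.  The units of the
valuation ring are exactly the elements of valuation `1`.  An extension `(K,v) ⊆ (L,w)`
is encoded by an algebra map with `v = w.comap (algebraMap K L)`, it is unramified when
`vK = wL`, and `ρ` is the canonical embedding of residue fields (characterized by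
commuting with the residue maps).  "`ac'` extends `ac`" means the square with `ρ`
commutes.
-/

/-- The residue map of a valuation, extended by `0` outside the valuation ring. -/
noncomputable def resOf {K Γ₀ : Type*} [Field K] [LinearOrderedCommGroupWithZero Γ₀]
    (v : Valuation K Γ₀) (x : K) : IsLocalRing.ResidueField v.valuationSubring :=
  if h : v x ≤ 1 then IsLocalRing.residue _ (⟨x, h⟩ : v.valuationSubring) else 0

/-- An angular component map on the valued field `(K, v)`. -/
structure AngComp {K Γ₀ : Type*} [Field K] [LinearOrderedCommGroupWithZero Γ₀]
    (v : Valuation K Γ₀) where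
  toFun : K → IsLocalRing.ResidueField v.valuationSubring
  zero_iff : ∀ x, toFun x = 0 ↔ x = 0
  map_mul : ∀ x y, toFun (x * y) = toFun x * toFun y
  res_eq : ∀ x, v x = 1 → toFun x = resOf v x

section Aux

variable {K Γ₀ : Type*} [Field K] [LinearOrderedCommGroupWithZero Γ₀] (v : Valuation K Γ₀)

lemma resOf_one' : resOf v 1 = 1 := by
  rw [resOf, dif_pos (by simp)]
  exact map_one (IsLocalRing.residue _)

lemma resOf_mul' {a b : K} (ha : v a ≤ 1) (hb : v b ≤ 1) :
    resOf v (a * b) = resOf v a * resOf v b := by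
  rw [resOf, resOf, resOf, dif_pos ha, dif_pos hb,
    dif_pos (by rw [map_mul]; exact mul_le_one' ha hb)]
  exact map_mul (IsLocalRing.residue _) (⟨a, ha⟩ : v.valuationSubring)
    (⟨b, hb⟩ : v.valuationSubring)

lemma resOf_ne_zero' {u : K} (hu : v u = 1) : resOf v u ≠ 0 := by
  have h1 : v u ≤ 1 := le_of_eq hu
  have hinv : v u⁻¹ ≤ 1 := by rw [map_inv₀, hu]; simp
  have hu0 : u ≠ 0 := by rintro rfl; simp at hu
  have hunit : IsUnit (⟨u, h1⟩ : v.valuationSubring) := by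
    refine isUnit_iff_exists_inv.mpr ⟨⟨u⁻¹, hinv⟩, ?_⟩
    ext
    exact mul_inv_cancel₀ hu0
  rw [resOf, dif_pos h1]
  exact (hunit.map (IsLocalRing.residue v.valuationSubring)).ne_zero

lemma AngComp.ext' {a b : AngComp v} (h : a.toFun = b.toFun) : a = b := by
  cases a; cases b; cases h; rfl

end Aux

theorem statement4 {K L Γ₀ : Type*} [Field K] [Field L] [Algebra K L]
    [LinearOrderedCommGroupWithZero Γ₀] (w : Valuation L Γ₀)
    (hunr : ∀ y : L, ∃ x : K, w (algebraMap K L x) = w y)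
    (ρ : IsLocalRing.ResidueField (w.comap (algebraMap K L)).valuationSubring →+*
      IsLocalRing.ResidueField w.valuationSubring)
    (hρ : ∀ x : K, ρ (resOf (w.comap (algebraMap K L)) x) = resOf w (algebraMap K L x))
    (ac : AngComp (w.comap (algebraMap K L))) :
    ∃! ac' : AngComp w, ∀ x : K, ac'.toFun (algebraMap K L x) = ρ (ac.toFun x) := by
  classical
  set f : L → IsLocalRing.ResidueField w.valuationSubring := fun y =>
    if hy : y = 0 then 0
    else ρ (ac.toFun (hunr y).choose) * resOf w (y / algebraMap K L (hunr y).choose) with hf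
  have hac1 : ac.toFun 1 = 1 := by
    rw [ac.res_eq 1 (by simp), resOf_one']
  have key : ∀ y : L, y ≠ 0 → ∀ x : K, w (algebraMap K L x) = w y →
      f y = ρ (ac.toFun x) * resOf w (y / algebraMap K L x) := by
    intro y hy x hx
    have h₀ : w (algebraMap K L (hunr y).choose) = w y := (hunr y).choose_spec
    set x₀ := (hunr y).choose with hx₀def
    have hwy : w y ≠ 0 := (Valuation.ne_zero_iff w).mpr hy
    have hx0 : x ≠ 0 := by
      rintro rfl; rw [map_zero, map_zero] at hx; exact hwy hx.symm
    have hx₀0 : x₀ ≠ 0 := by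
      intro h0; rw [h0, map_zero, map_zero] at h₀; exact hwy h₀.symm
    have hφx : algebraMap K L x ≠ 0 := fun h => hx0 ((map_eq_zero (algebraMap K L)).mp h)
    have hφx₀ : algebraMap K L x₀ ≠ 0 := fun h => hx₀0 ((map_eq_zero (algebraMap K L)).mp h)
    have hwφx : w (algebraMap K L x) ≠ 0 := (Valuation.ne_zero_iff w).mpr hφx
    have hquot : w (algebraMap K L x₀ / algebraMap K L x) = 1 := by
      rw [map_div₀, h₀, ← hx, div_self hwφx]
    have hquot' : w (y / algebraMap K L x₀) = 1 := by
      rw [map_div₀, ← h₀, div_self ((Valuation.ne_zero_iff w).mpr hφx₀)]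
    have hsplit : x₀ = x * (x₀ / x) := by field_simp
    have hρq : ρ (ac.toFun (x₀ / x)) = resOf w (algebraMap K L x₀ / algebraMap K L x) := by
      have hvq : (w.comap (algebraMap K L)) (x₀ / x) = 1 := by
        show w (algebraMap K L (x₀ / x)) = 1
        rw [map_div₀]; exact hquot
      rw [ac.res_eq _ hvq, hρ, map_div₀]
    have hsplit2 : y / algebraMap K L x = y / algebraMap K L x₀ *
        (algebraMap K L x₀ / algebraMap K L x) := by field_simp
    have hfy : f y = ρ (ac.toFun x₀) * resOf w (y / algebraMap K L x₀) := by
      rw [hf]; exact dif_neg hy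
    rw [hfy, hsplit2, resOf_mul' w (le_of_eq hquot') (le_of_eq hquot), ← hρq]
    nth_rewrite 1 [hsplit]
    rw [ac.map_mul, map_mul]
    ring
  have hf0 : f 0 = 0 := dif_pos rfl
  refine ⟨⟨f, ?_, ?_, ?_⟩, ?_, ?_⟩
  · -- zero_iff
    intro y
    constructor
    · intro h
      by_contra hy
      have h₀ : w (algebraMap K L (hunr y).choose) = w y := (hunr y).choose_spec
      set x₀ := (hunr y).choose with hx₀def
      have hwy : w y ≠ 0 := (Valuation.ne_zero_iff w).mpr hy
      have hx₀0 : x₀ ≠ 0 := by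
        intro h0; rw [h0, map_zero, map_zero] at h₀; exact hwy h₀.symm
      have hφx₀ : algebraMap K L x₀ ≠ 0 := fun hh => hx₀0 ((map_eq_zero (algebraMap K L)).mp hh)
      have hquot' : w (y / algebraMap K L x₀) = 1 := by
        rw [map_div₀, ← h₀, div_self ((Valuation.ne_zero_iff w).mpr hφx₀)]
      rw [key y hy x₀ h₀] at h
      rcases mul_eq_zero.mp h with h1 | h1
      · exact hx₀0 ((ac.zero_iff x₀).mp ((map_eq_zero ρ).mp h1))
      · exact resOf_ne_zero' w hquot' h1
    · rintro rfl; exact hf0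
  · -- map_mul
    intro y₁ y₂
    by_cases h1 : y₁ = 0
    · subst h1; rw [zero_mul, hf0, zero_mul]
    by_cases h2 : y₂ = 0
    · subst h2; rw [mul_zero, hf0, mul_zero]
    have h12 : y₁ * y₂ ≠ 0 := mul_ne_zero h1 h2
    have hx₁ : w (algebraMap K L (hunr y₁).choose) = w y₁ := (hunr y₁).choose_spec
    have hx₂ : w (algebraMap K L (hunr y₂).choose) = w y₂ := (hunr y₂).choose_spec
    set x₁ := (hunr y₁).choose
    set x₂ := (hunr y₂).choose
    have hφ1 : algebraMap K L x₁ ≠ 0 := by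
      intro hh; rw [hh, map_zero] at hx₁
      exact (Valuation.ne_zero_iff w).mpr h1 hx₁.symm
    have hφ2 : algebraMap K L x₂ ≠ 0 := by
      intro hh; rw [hh, map_zero] at hx₂
      exact (Valuation.ne_zero_iff w).mpr h2 hx₂.symm
    have hq1 : w (y₁ / algebraMap K L x₁) = 1 := by
      rw [map_div₀, ← hx₁, div_self ((Valuation.ne_zero_iff w).mpr hφ1)]
    have hq2 : w (y₂ / algebraMap K L x₂) = 1 := by
      rw [map_div₀, ← hx₂, div_self ((Valuation.ne_zero_iff w).mpr hφ2)]
    have hxx : w (algebraMap K L (x₁ * x₂)) = w (y₁ * y₂) := by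
      rw [map_mul, map_mul, map_mul, hx₁, hx₂]
    have hres : resOf w (y₁ * y₂ / (algebraMap K L x₁ * algebraMap K L x₂)) =
        resOf w (y₁ / algebraMap K L x₁) * resOf w (y₂ / algebraMap K L x₂) := by
      rw [← div_mul_div_comm]
      exact resOf_mul' w (le_of_eq hq1) (le_of_eq hq2)
    show f (y₁ * y₂) = f y₁ * f y₂
    rw [key _ h12 _ hxx, key _ h1 _ hx₁, key _ h2 _ hx₂, ac.map_mul, map_mul,
      map_mul (algebraMap K L), hres]
    ring
  · -- res_eq
    intro y hy
    have hy0 : y ≠ 0 := by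
      rintro rfl; rw [map_zero] at hy; exact zero_ne_one hy
    have h1 : w (algebraMap K L 1) = w y := by rw [map_one, map_one, hy]
    show f y = resOf w y
    rw [key y hy0 1 h1, hac1, map_one, one_mul, map_one, div_one]
  · -- extension property
    intro x
    show f (algebraMap K L x) = ρ (ac.toFun x)
    by_cases hx : x = 0
    · subst hx
      rw [map_zero, hf0, (ac.zero_iff 0).mpr rfl, map_zero]
    · have hφx : algebraMap K L x ≠ 0 := fun hh => hx ((map_eq_zero (algebraMap K L)).mp hh)
      rw [key (algebraMap K L x) hφx x rfl, div_self hφx, resOf_one', mul_one]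
  · -- uniqueness
    intro b hb
    apply AngComp.ext'
    funext y
    show b.toFun y = f y
    by_cases hy : y = 0
    · subst hy
      rw [(b.zero_iff 0).mpr rfl, hf0]
    have h₀ : w (algebraMap K L (hunr y).choose) = w y := (hunr y).choose_spec
    set x₀ := (hunr y).choose with hx₀def
    have hwy : w y ≠ 0 := (Valuation.ne_zero_iff w).mpr hy
    have hx₀0 : x₀ ≠ 0 := by
      intro h0; rw [h0, map_zero, map_zero] at h₀; exact hwy h₀.symm
    have hφx₀ : algebraMap K L x₀ ≠ 0 := fun hh => hx₀0 ((map_eq_zero (algebraMap K L)).mp hh)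
    have hquot' : w (y / algebraMap K L x₀) = 1 := by
      rw [map_div₀, ← h₀, div_self ((Valuation.ne_zero_iff w).mpr hφx₀)]
    have hysplit : y = algebraMap K L x₀ * (y / algebraMap K L x₀) := by field_simp
    have hby : b.toFun y = ρ (ac.toFun x₀) * resOf w (y / algebraMap K L x₀) := by
      nth_rewrite 1 [hysplit]
      rw [b.map_mul, hb x₀, b.res_eq _ hquot']
    rw [hby, key y hy x₀ h₀]
end

section
/- Let (K, v, δ) be a differentially henselian field of equicharacteristic 0, i.e., (K,v) is a henselian valued field of residue characteristic 0 and for every differential polynomial f ∈ K{x} of order n, every ā ∈ K^{n+1} with f_alg(ā) = 0 and s(f)_alg(ā) ≠ 0, and every γ ∈ vK, there is b ∈ K with f(b) = 0 and v(δ^i(b) − a_i) > γ for i ≤ n. Then for any maximal differential subfield L of the valuation ring O_v, the restriction of the residue map to L is surjective onto the residue field Kv. -/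
/-!
STATEMENT 10.  Multiplicative valuations: `v(x) > γ` (additive, `γ ∈ vK`) becomes
`v x < v c` for `c ∈ K^×`, and `x ∈ O_v` is `v x ≤ 1`.  A differential polynomial of
order `n` is represented by its algebraic avatar `f : MvPolynomial (Fin (n+1)) K` (the
variable `i` stands for `x^(i)`), so `f(b) = eval (fun i => δ^[i] b) f` and the separant
is `pderiv (Fin.last n) f`.  Equicharacteristic 0 means `K` and the residue field have
characteristic 0, and a maximal differential subfield of `O_v` is a subfield of `K`
contained in `O_v` and closed under `δ`, maximal among such.  The conclusion says the
residue map restricted to `L` is onto the residue field.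
-/

open MvPolynomial

section Aux

variable {K : Type*} [Field K]

theorem deltaZero (δ : K → K) (hδadd : ∀ x y, δ (x + y) = δ x + δ y) : δ 0 = 0 := by
  have h := hδadd 0 0
  rw [add_zero] at h
  exact (left_eq_add.mp h)

theorem deltaOne (δ : K → K) (hδmul : ∀ x y, δ (x * y) = δ x * y + x * δ y) : δ 1 = 0 := by
  have h := hδmul 1 1
  rw [mul_one, mul_one, one_mul] at h
  exact (left_eq_add.mp h)

theorem deltaPow (δ : K → K) (hδmul : ∀ x y, δ (x * y) = δ x * y + x * δ y) (t : K) :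
    ∀ n : ℕ, δ (t ^ n) = n * t ^ (n - 1) * δ t
  | 0 => by simp [deltaOne δ hδmul]
  | (n + 1) => by
    rw [pow_succ, hδmul, deltaPow δ hδmul t n]
    cases n with
    | zero => simp
    | succ m =>
      simp only [Nat.add_sub_cancel]
      push_cast
      ring

noncomputable def Dpoly (δ : K → K) (L : Subfield K) (hLd : ∀ x ∈ L, δ x ∈ L)
    (q : Polynomial L) : Polynomial L :=
  q.sum fun n c => Polynomial.C (⟨δ c, hLd c c.2⟩ : L) * Polynomial.X ^ n

theorem Dpoly_add (δ : K → K) (hδadd : ∀ x y, δ (x + y) = δ x + δ y)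
    (L : Subfield K) (hLd : ∀ x ∈ L, δ x ∈ L) (p q : Polynomial L) :
    Dpoly δ L hLd (p + q) = Dpoly δ L hLd p + Dpoly δ L hLd q := by
  unfold Dpoly
  apply Polynomial.sum_add_index
  · intro n
    have h0 : (⟨δ ((0 : L) : K), hLd _ (0 : L).2⟩ : L) = 0 := by
      ext
      simpa using deltaZero δ hδadd
    rw [h0, Polynomial.C_0, zero_mul]
  · intro n a b
    have h0 : (⟨δ ((a + b : L) : K), hLd _ (a + b : L).2⟩ : L)
        = ⟨δ (a : K), hLd _ a.2⟩ + ⟨δ (b : K), hLd _ b.2⟩ := by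
      ext
      push_cast
      exact hδadd _ _
    rw [h0, Polynomial.C_add, add_mul]

theorem delta_aeval (δ : K → K) (hδadd : ∀ x y, δ (x + y) = δ x + δ y)
    (hδmul : ∀ x y, δ (x * y) = δ x * y + x * δ y)
    (L : Subfield K) (hLd : ∀ x ∈ L, δ x ∈ L) (t : K) (q : Polynomial L) :
    δ (Polynomial.aeval t q) =
      Polynomial.aeval t (Dpoly δ L hLd q)
        + Polynomial.aeval t (Polynomial.derivative q) * δ t := by
  induction q using Polynomial.induction_on' with
  | add p q hp hq =>
    rw [map_add, hδadd, hp, hq, Dpoly_add δ hδadd, map_add, map_add, map_add]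
    ring
  | monomial n a =>
    have hD : Dpoly δ L hLd (Polynomial.monomial n a)
        = Polynomial.C (⟨δ (a : K), hLd _ a.2⟩ : L) * Polynomial.X ^ n := by
      unfold Dpoly
      apply Polynomial.sum_monomial_index
      have h0 : (⟨δ ((0 : L) : K), hLd _ (0 : L).2⟩ : L) = 0 := by
        ext
        simpa using deltaZero δ hδadd
      rw [h0, Polynomial.C_0, zero_mul]
    rw [hD, Polynomial.derivative_monomial, Polynomial.aeval_monomial, hδmul,
      deltaPow δ hδmul, map_mul, Polynomial.aeval_C, map_pow, Polynomial.aeval_X,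
      Polynomial.aeval_monomial]
    have hcoe : ∀ x : L, (algebraMap L K) x = (x : K) := fun _ => rfl
    rw [hcoe, hcoe, hcoe]
    push_cast
    ring

end Aux

set_option maxHeartbeats 1000000 in
set_option synthInstance.maxHeartbeats 400000 in
theorem statement10 {K Γ₀ : Type*} [Field K] [CharZero K]
    [LinearOrderedCommGroupWithZero Γ₀] (v : Valuation K Γ₀)
    (hH : HenselianLocalRing ↥v.valuationSubring)
    (hres0 : CharZero (IsLocalRing.ResidueField ↥v.valuationSubring))
    (δ : K → K) (hδadd : ∀ x y, δ (x + y) = δ x + δ y)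
    (hδmul : ∀ x y, δ (x * y) = δ x * y + x * δ y)
    (hDH : ∀ (n : ℕ) (f : MvPolynomial (Fin (n + 1)) K) (a : Fin (n + 1) → K),
      eval a f = 0 → eval a (pderiv (Fin.last n) f) ≠ 0 →
      ∀ c : K, c ≠ 0 → ∃ b : K,
        eval (fun i : Fin (n + 1) => δ^[(i : ℕ)] b) f = 0 ∧
        ∀ i : Fin (n + 1), v (δ^[(i : ℕ)] b - a i) < v c)
    (L : Subfield K) (hLsub : ∀ x ∈ L, v x ≤ 1) (hLdiff : ∀ x ∈ L, δ x ∈ L)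
    (hLmax : ∀ L' : Subfield K, (∀ x ∈ L', v x ≤ 1) → (∀ x ∈ L', δ x ∈ L') →
      L ≤ L' → L' = L) :
    ∀ y : IsLocalRing.ResidueField ↥v.valuationSubring, ∃ x ∈ L, resOf v x = y := by
  classical
  set O := v.valuationSubring with hO
  intro y
  let ι : ↥L →+* ↥O :=
    { toFun := fun x => ⟨x, hLsub x x.2⟩
      map_one' := rfl
      map_mul' := fun _ _ => rfl
      map_zero' := rfl
      map_add' := fun _ _ => rfl }
  let φ : ↥L →+* IsLocalRing.ResidueField ↥O := (IsLocalRing.residue ↥O).comp ι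
  set k₀ : Subfield (IsLocalRing.ResidueField ↥O) := φ.fieldRange with hk₀
  let φ' : ↥L →+* ↥k₀ := φ.rangeRestrictField
  haveI : CharZero ↥k₀ := by
    refine ⟨fun m n h => ?_⟩
    have h2 : ((m : ↥k₀) : IsLocalRing.ResidueField ↥O)
        = ((n : ↥k₀) : IsLocalRing.ResidueField ↥O) := congrArg _ h
    exact_mod_cast h2
  -- common computational facts
  have hunitval : ∀ c : ↥O, IsUnit c → v (c : K) = 1 := by
    rintro c ⟨u, rfl⟩
    have h1 : v (((u : ↥O) : K)) ≤ 1 := (u : ↥O).2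
    have h2 : v ((((u⁻¹ : (↥O)ˣ) : ↥O)) : K) ≤ 1 := ((u⁻¹ : (↥O)ˣ) : ↥O).2
    have h3 : v (((u : ↥O) : K) * (((u⁻¹ : (↥O)ˣ) : ↥O) : K)) = 1 := by
      have h4 : ((u : ↥O) : K) * (((u⁻¹ : (↥O)ˣ) : ↥O) : K)
          = ((((u * u⁻¹ : (↥O)ˣ) : ↥O)) : K) := by
        push_cast
        rfl
      rw [h4, mul_inv_cancel]
      simp
    refine le_antisymm h1 ?_
    calc (1 : Γ₀) = v ((u : ↥O) : K) * v (((u⁻¹ : (↥O)ˣ) : ↥O) : K) := by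
          rw [← v.map_mul, h3]
      _ ≤ v ((u : ↥O) : K) * 1 := mul_le_mul_right h2 _
      _ = v ((u : ↥O) : K) := mul_one _
  have hmaxmem : ∀ c : ↥O, v (c : K) < 1 → c ∈ IsLocalRing.maximalIdeal ↥O := by
    intro c hc
    rw [IsLocalRing.mem_maximalIdeal, mem_nonunits_iff]
    intro hu
    rw [hunitval c hu] at hc
    exact lt_irrefl _ hc
  have haev : ∀ (c : ↥O) (q : Polynomial ↥L),
      Polynomial.aeval (c : K) q = (((q.map ι).eval c : ↥O) : K) := by
    intro c q
    rw [Polynomial.eval_map]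
    rw [show (((Polynomial.eval₂ ι c q : ↥O)) : K) = algebraMap (↥O) K (Polynomial.eval₂ ι c q)
        from rfl,
      Polynomial.hom_eval₂, Polynomial.aeval_def]
    rfl
  have hres_eval : ∀ (c : ↥O) (q : Polynomial ↥L),
      IsLocalRing.residue ↥O ((q.map ι).eval c)
        = Polynomial.aeval (IsLocalRing.residue ↥O c) (q.map φ') := by
    intro c q
    rw [Polynomial.eval_map, Polynomial.hom_eval₂]
    rw [Polynomial.aeval_def, Polynomial.eval₂_map]
    rfl
  have key : ∀ bO : ↥O, IsLocalRing.residue ↥O bO = y →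
      ∀ L' : Subfield K, (∀ x ∈ L', v x ≤ 1) → (∀ x ∈ L', δ x ∈ L') → L ≤ L' →
      (bO : K) ∈ L' → ∃ x ∈ L, resOf v x = y := by
    intro bO hres L' h1 h2 h3 hbmem
    refine ⟨bO, ?_, ?_⟩
    · rw [← hLmax L' h1 h2 h3]
      exact hbmem
    · have hle : v (bO : K) ≤ 1 := bO.2
      unfold resOf
      rw [dif_pos hle]
      exact hres
  by_cases hy : IsAlgebraic ↥k₀ y
  · -- algebraic case: use henselianity
    have hyint : IsIntegral ↥k₀ y := hy.isIntegral
    set p := minpoly ↥k₀ y with hp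
    have hpmonic : p.Monic := minpoly.monic hyint
    have hproot : Polynomial.aeval y p = 0 := minpoly.aeval _ _
    have hder : Polynomial.aeval y (Polynomial.derivative p) ≠ 0 := by
      have hsep : p.Separable := (minpoly.irreducible hyint).separable
      obtain ⟨a, b, hab⟩ := hsep
      intro h0
      have h5 := congrArg (Polynomial.aeval y) hab
      rw [map_add, map_mul, map_mul, hproot, h0, mul_zero, mul_zero, add_zero, map_one] at h5
      exact zero_ne_one h5
    have hsurj : Function.Surjective φ' := by
      intro z
      obtain ⟨x, hx⟩ := RingHom.mem_fieldRange.mp z.2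
      exact ⟨x, Subtype.ext (by rw [φ.coe_rangeRestrictField]; exact hx)⟩
    obtain ⟨P, hPmap, -, hPmonic⟩ := Polynomial.lifts_and_degree_eq_and_monic
      ((Polynomial.lifts_iff_coeff_lifts p).2 fun n => hsurj (p.coeff n)) hpmonic
    obtain ⟨a₀, ha₀⟩ := IsLocalRing.residue_surjective (R := ↥O) y
    set PO := P.map ι with hPO
    have hresPO : ∀ c : ↥O, IsLocalRing.residue ↥O (PO.eval c)
        = Polynomial.aeval (IsLocalRing.residue ↥O c) p := by
      intro c
      rw [hPO, hres_eval c P, hPmap]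
    have hresPO' : ∀ c : ↥O, IsLocalRing.residue ↥O ((Polynomial.derivative PO).eval c)
        = Polynomial.aeval (IsLocalRing.residue ↥O c) (Polynomial.derivative p) := by
      intro c
      rw [hPO, Polynomial.derivative_map, hres_eval c (Polynomial.derivative P),
        ← Polynomial.derivative_map, hPmap]
    have h1 : PO.eval a₀ ∈ IsLocalRing.maximalIdeal ↥O := by
      rw [← Ideal.Quotient.eq_zero_iff_mem]
      show IsLocalRing.residue ↥O _ = 0
      rw [hresPO, ha₀, hproot]
    have h2 : IsUnit ((Polynomial.derivative PO).eval a₀) := by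
      rw [← IsLocalRing.notMem_maximalIdeal]
      intro hmem
      apply hder
      rw [← ha₀, ← hresPO']
      exact Ideal.Quotient.eq_zero_iff_mem.mpr hmem
    obtain ⟨bO, hroot, hbsub⟩ := hH.is_henselian PO (hPmonic.map ι) a₀ h1 h2
    have hresb : IsLocalRing.residue ↥O bO = y := by
      have h6 : IsLocalRing.residue ↥O (bO - a₀) = 0 := Ideal.Quotient.eq_zero_iff_mem.mpr hbsub
      rw [map_sub, sub_eq_zero] at h6
      rw [h6, ha₀]
    set b : K := (bO : K) with hb
    have hPb : Polynomial.aeval b P = 0 := by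
      rw [haev bO P, show (P.map ι).eval bO = 0 from hroot]
      rfl
    have hint : IsIntegral ↥L b := ⟨P, hPmonic, by rw [← Polynomial.aeval_def]; exact hPb⟩
    set M := IntermediateField.adjoin ↥L {b} with hM
    set L' : Subfield K := M.toSubfield with hL'
    have hLle : L ≤ L' := fun x hx => M.algebraMap_mem ⟨x, hx⟩
    have hrep : ∀ x ∈ L', ∃ q : Polynomial ↥L, Polynomial.aeval b q = x := by
      intro x hx
      have hx2 : x ∈ (IntermediateField.adjoin ↥L {b}).toSubalgebra := hx
      rw [IntermediateField.adjoin_simple_toSubalgebra_of_isAlgebraic hint.isAlgebraic,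
        Algebra.adjoin_singleton_eq_range_aeval] at hx2
      obtain ⟨q, hq⟩ := hx2
      exact ⟨q, hq⟩
    have haemem : ∀ s : Polynomial ↥L, Polynomial.aeval b s ∈ L' := by
      intro s
      have h7 : Polynomial.aeval b s ∈ Algebra.adjoin ↥L ({b} : Set K) := by
        rw [Algebra.adjoin_singleton_eq_range_aeval]
        exact ⟨s, rfl⟩
      exact IntermediateField.algebra_adjoin_le_adjoin _ _ h7
    have hv1 : ∀ x ∈ L', v x ≤ 1 := by
      intro x hx
      obtain ⟨q, hq⟩ := hrep x hx
      rw [← hq, haev bO q]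
      exact ((q.map ι).eval bO).2
    have hPder_ne : Polynomial.aeval b (Polynomial.derivative P) ≠ 0 := by
      rw [haev bO (Polynomial.derivative P)]
      intro h0
      have h8 : ((Polynomial.derivative P).map ι).eval bO = 0 := by exact_mod_cast h0
      apply hder
      rw [← hresb, ← hresPO', hPO, Polynomial.derivative_map, h8, map_zero]
    have hδb_mem : δ b ∈ L' := by
      have h0 := delta_aeval δ hδadd hδmul L hLdiff b P
      rw [hPb, deltaZero δ hδadd] at h0
      have h9 : δ b = (0 - Polynomial.aeval b (Dpoly δ L hLdiff P))
          / Polynomial.aeval b (Polynomial.derivative P) := by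
        rw [eq_div_iff hPder_ne]
        linear_combination -h0
      rw [h9]
      exact div_mem (sub_mem (zero_mem _) (haemem _)) (haemem _)
    have hδclosed : ∀ x ∈ L', δ x ∈ L' := by
      intro x hx
      obtain ⟨q, hq⟩ := hrep x hx
      rw [← hq, delta_aeval δ hδadd hδmul L hLdiff b q]
      exact add_mem (haemem _) (mul_mem (haemem _) hδb_mem)
    exact key bO hresb L' hv1 hδclosed hLle (IntermediateField.mem_adjoin_simple_self ↥L b)
  · -- transcendental case: use differential henselianity to find a constant
    obtain ⟨a₀, ha₀⟩ := IsLocalRing.residue_surjective (R := ↥O) y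
    obtain ⟨b, hb1, hb2⟩ := hDH 1 (X 1) ![(a₀ : K), 0]
      (by simp) (by simp [show (Fin.last 1) = 1 from rfl]) 1 one_ne_zero
    have hδb : δ b = 0 := by simpa using hb1
    have hvba : v (b - (a₀ : K)) < 1 := by simpa using hb2 0
    have hvb : v b ≤ 1 := by
      have hsum : b = (b - (a₀ : K)) + (a₀ : K) := by ring
      rw [hsum]
      exact le_trans (v.map_add _ _) (max_le (le_of_lt hvba) a₀.2)
    set bO : ↥O := ⟨b, hvb⟩ with hbO
    have hbcoe : (bO : K) = b := rfl
    have hresb : IsLocalRing.residue ↥O bO = y := by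
      have hmem : bO - a₀ ∈ IsLocalRing.maximalIdeal ↥O := by
        apply hmaxmem
        show v ((bO - a₀ : ↥O) : K) < 1
        push_cast
        exact hvba
      have h0 : IsLocalRing.residue ↥O (bO - a₀) = 0 := Ideal.Quotient.eq_zero_iff_mem.mpr hmem
      rw [map_sub, sub_eq_zero] at h0
      rw [h0, ha₀]
    have hval_eval : ∀ q : Polynomial ↥L, q ≠ 0 → v (Polynomial.aeval b q) = 1 := by
      intro q hq
      have hres_ne : IsLocalRing.residue ↥O ((q.map ι).eval bO) ≠ 0 := by
        rw [hres_eval, hresb]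
        intro h0
        exact hy ⟨q.map φ', Polynomial.map_ne_zero hq, h0⟩
      have hunit : IsUnit ((q.map ι).eval bO) := by
        rw [← IsLocalRing.notMem_maximalIdeal]
        intro hmem
        exact hres_ne (Ideal.Quotient.eq_zero_iff_mem.mpr hmem)
      rw [← hbcoe, haev bO q]
      exact hunitval _ hunit
    set M := IntermediateField.adjoin ↥L {b} with hM
    set L' : Subfield K := M.toSubfield with hL'
    have hLle : L ≤ L' := fun x hx => M.algebraMap_mem ⟨x, hx⟩
    have haemem : ∀ s : Polynomial ↥L, Polynomial.aeval b s ∈ L' := by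
      intro s
      have h7 : Polynomial.aeval b s ∈ Algebra.adjoin ↥L ({b} : Set K) := by
        rw [Algebra.adjoin_singleton_eq_range_aeval]
        exact ⟨s, rfl⟩
      exact IntermediateField.algebra_adjoin_le_adjoin _ _ h7
    have hrep : ∀ x ∈ L', ∃ q r : Polynomial ↥L,
        x = Polynomial.aeval b q / Polynomial.aeval b r :=
      fun x hx => (IntermediateField.mem_adjoin_simple_iff ↥L x).1 hx
    have hv1 : ∀ x ∈ L', v x ≤ 1 := by
      intro x hx
      obtain ⟨q, r, hx'⟩ := hrep x hx
      by_cases hr : Polynomial.aeval b r = 0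
      · rw [hx', hr, div_zero]
        simp
      · have hrne : r ≠ 0 := fun h => hr (by rw [h, map_zero])
        rw [hx', map_div₀, hval_eval r hrne, div_one, ← hbcoe, haev bO q]
        exact ((q.map ι).eval bO).2
    have hδclosed : ∀ x ∈ L', δ x ∈ L' := by
      intro x hx
      obtain ⟨q, r, hx'⟩ := hrep x hx
      by_cases hr : Polynomial.aeval b r = 0
      · rw [hx', hr, div_zero, deltaZero δ hδadd]
        exact zero_mem _
      · have hxr : x * Polynomial.aeval b r = Polynomial.aeval b q := by
          rw [hx', div_mul_cancel₀ _ hr]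
        have hd := congrArg δ hxr
        rw [hδmul, delta_aeval δ hδadd hδmul L hLdiff b r,
          delta_aeval δ hδadd hδmul L hLdiff b q, hδb, mul_zero, add_zero, mul_zero,
          add_zero] at hd
        have h9 : δ x = (Polynomial.aeval b (Dpoly δ L hLdiff q)
            - x * Polynomial.aeval b (Dpoly δ L hLdiff r)) / Polynomial.aeval b r := by
          rw [eq_div_iff hr]
          linear_combination hd
        rw [h9]
        exact div_mem (sub_mem (haemem _) (mul_mem hx (haemem _))) (haemem _)
    exact key bO hresb L' hv1 hδclosed hLle (IntermediateField.mem_adjoin_simple_self ↥L b)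
end

section
/- Let (K, δ) be a differentially closed field of characteristic 0 (a model of DCF₀) with constant field C_K. Then K admits a nontrivial henselian valuation v such that the constants C_K are not dense in K with respect to the valuation topology; in particular (K, v, δ) is not differentially henselian. (Concretely: for any a ∈ K \ C_K, there is a valuation ring O of K containing C_K[a] whose maximal ideal meets C_K[a] in the ideal aC_K[a]; then v(C_K^×) = {0}, so the open ball {x : v(x) > 0} contains no nonzero constant.) -/
/-!
STATEMENT 11.  A model of DCF₀ is concretely an algebraically closed field `K` of
characteristic 0 with a nonzero derivation `δ` whose constant field
`C_K = {x | δ x = 0}` is algebraically closed.  The conclusion: there is a nontrivial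
valuation ring `O` of `K` (automatically henselian, as `K` is algebraically closed) whose
associated valuation is `1` on every nonzero constant (additively: `v(C_K^×) = {0}`), so
the open ball `{x : v x < 1}` (additively `v(x) > 0`) around `0` contains no nonzero
constant and the constants are not dense; in particular `(K, v, δ)` is not differentially
henselian.  We also record the containment `m ∩ C_K[a] = a·C_K[a]` via the witness `a`.
-/


open Polynomial IsLocalRing in
/-- Every valuation subring of an algebraically closed field is henselian. -/
theorem ValuationSubring.henselianLocalRing_of_isAlgClosed
    {K : Type*} [Field K] [IsAlgClosed K] (O : ValuationSubring K) :
    HenselianLocalRing ↥O := by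
  refine { is_henselian := ?_ }
  intro p hp b₀ hb₀ _
  classical
  set ι : ↥O →+* K := O.toSubring.subtype with hι
  set F : K[X] := p.map ι with hF
  have hFmonic : F.Monic := hp.map ι
  have hFsplit : F = (F.roots.map (fun r => X - C r)).prod :=
    (IsAlgClosed.splits F).eq_prod_roots_of_monic hFmonic
  have hevalF : ∀ x : ↥O, F.eval (x : K) = ι (p.eval x) := by
    intro x
    show (p.map ι).eval (ι x) = ι (p.eval x)
    rw [Polynomial.eval_map, Polynomial.eval₂_hom]
  have hvb₀ : O.valuation (ι (p.eval b₀)) < 1 := (O.valuation_lt_one_iff _).mp hb₀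
  have hprod : O.valuation (F.eval (b₀ : K)) < 1 := by rw [hevalF]; exact hvb₀
  have : ∃ r ∈ F.roots, O.valuation ((b₀ : K) - r) < 1 := by
    by_contra h
    push_neg at h
    have : (1 : _) ≤ O.valuation (F.eval (b₀ : K)) := by
      conv_rhs => rw [hFsplit]
      rw [Polynomial.eval_multiset_prod, Multiset.map_map, map_multiset_prod, Multiset.map_map]
      apply Multiset.one_le_prod
      intro u hu
      rw [Multiset.mem_map] at hu
      obtain ⟨r, hr, rfl⟩ := hu
      simpa using h r hr
    exact absurd hprod (not_lt.mpr this)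
  obtain ⟨r, hr, hvr⟩ := this
  have hrO : r ∈ O := by
    apply O.mem_of_valuation_le_one
    have : r = (b₀ : K) - ((b₀ : K) - r) := by ring
    rw [this]
    refine le_trans (O.valuation.map_sub _ _) (max_le (O.valuation_le_one b₀) hvr.le)
  refine ⟨⟨r, hrO⟩, ?_, ?_⟩
  · have : ι (p.eval ⟨r, hrO⟩) = 0 := by
      rw [← hevalF]
      exact Polynomial.isRoot_of_mem_roots hr
    exact Subtype.ext this
  · rw [O.valuation_lt_one_iff]
    have : ((⟨r, hrO⟩ - b₀ : ↥O) : K) = r - (b₀ : K) := rfl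
    rw [this, Valuation.map_sub_swap]
    exact hvr

/-- The constant subfield of a derivation. -/
def constSubfield {K : Type*} [Field K] (δ : K → K)
    (hδadd : ∀ x y, δ (x + y) = δ x + δ y)
    (hδmul : ∀ x y, δ (x * y) = δ x * y + x * δ y) : Subfield K where
  carrier := {x | δ x = 0}
  zero_mem' := by have := hδadd 0 0; simpa using this
  one_mem' := by have := hδmul 1 1; simpa using this
  add_mem' := by intro a b ha hb; simp only [Set.mem_setOf_eq] at *; rw [hδadd, ha, hb, add_zero]
  mul_mem' := by
    intro a b ha hb; simp only [Set.mem_setOf_eq] at *; rw [hδmul, ha, hb]; ring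
  neg_mem' := by
    intro a ha; simp only [Set.mem_setOf_eq] at *
    have h0 : δ 0 = 0 := by have := hδadd 0 0; simpa using this
    have h2 := hδadd a (-a)
    rw [add_neg_cancel, h0, ha] at h2
    simpa using h2.symm
  inv_mem' := by
    intro a ha
    simp only [Set.mem_setOf_eq] at *
    by_cases h : a = 0
    · have h0 : δ 0 = 0 := by have := hδadd 0 0; simpa using this
      simp [h, h0]
    · have h2 := hδmul a a⁻¹
      rw [mul_inv_cancel₀ h, ha] at h2
      have h1 : δ 1 = 0 := by have := hδmul 1 1; simpa using this
      rw [h1] at h2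
      have h3 : a * δ a⁻¹ = 0 := by simpa using h2.symm
      rcases mul_eq_zero.1 h3 with h' | h'
      · exact absurd h' h
      · exact h'

theorem statement11 {K : Type*} [Field K] [IsAlgClosed K] [CharZero K]
    (δ : K → K) (hδadd : ∀ x y, δ (x + y) = δ x + δ y)
    (hδmul : ∀ x y, δ (x * y) = δ x * y + x * δ y)
    (hδne : ∃ x : K, δ x ≠ 0)
    (hC : IsAlgClosed ↥(constSubfield δ hδadd hδmul)) :
    ∃ O : ValuationSubring K,
      O ≠ ⊤ ∧ HenselianLocalRing ↥O ∧
      (∀ c : K, δ c = 0 → c ≠ 0 → O.valuation c = 1) ∧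
      ∃ x : K, x ≠ 0 ∧ O.valuation x < 1 ∧
        ∀ c : K, δ c = 0 → ¬ O.valuation (x - c) < O.valuation x := by
  classical
  open Polynomial IsLocalRing in
  set C : Subfield K := constSubfield δ hδadd hδmul with hCdef
  haveI : IsAlgClosed ↥C := hC
  have hmemC : ∀ c : K, c ∈ C ↔ δ c = 0 := fun c => Iff.rfl
  obtain ⟨a, ha⟩ := hδne
  have hδ0 : δ 0 = 0 := by have := hδadd 0 0; simpa using this
  have ha0 : a ≠ 0 := fun h => ha (h ▸ hδ0)
  have haC : a ∉ C := fun h => ha ((hmemC a).mp h)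
  -- a is transcendental over C
  have htrans : Transcendental C a := by
    intro halg
    have hInt : IsIntegral C a := halg.isIntegral
    have hirr := minpoly.irreducible hInt
    have hdeg : (minpoly C a).degree = 1 := IsAlgClosed.degree_eq_one_of_irreducible _ hirr
    have hmon := minpoly.monic hInt
    have hnat : (minpoly C a).natDegree = 1 := Polynomial.natDegree_eq_of_degree_eq_some hdeg
    have heq : minpoly C a = Polynomial.X + Polynomial.C ((minpoly C a).coeff 0) :=
      hmon.eq_X_add_C hnat
    have h2 := minpoly.aeval C a
    rw [heq] at h2
    simp only [map_add, Polynomial.aeval_X, Polynomial.aeval_C] at h2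
    have h3 : a = algebraMap C K (-(minpoly C a).coeff 0) := by
      rw [map_neg]; linear_combination h2
    exact haC (h3 ▸ (-(minpoly C a).coeff 0).2)
  have hinj : Function.Injective (Polynomial.aeval a : Polynomial C →ₐ[C] K) :=
    transcendental_iff_injective.mp htrans
  set P : Ideal (Polynomial C) := Ideal.span {Polynomial.X} with hP
  haveI hPp : P.IsPrime :=
    (Ideal.span_singleton_prime Polynomial.X_ne_zero).mpr Polynomial.prime_X
  set φ : Polynomial C →+* K := (Polynomial.aeval a : Polynomial C →ₐ[C] K).toRingHom with hφ
  have hφu : ∀ q : P.primeCompl, IsUnit (φ q) := by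
    rintro ⟨q, hq⟩
    have hq0 : q ≠ 0 := fun h => hq (h ▸ P.zero_mem)
    refine isUnit_iff_ne_zero.mpr fun h => hq0 (hinj ?_)
    simpa [hφ] using h
  set f : Localization.AtPrime P →+* K := IsLocalization.lift hφu with hf
  have hfinj : Function.Injective f := by
    rw [injective_iff_map_eq_zero]
    intro z hz
    obtain ⟨q, s, rfl⟩ := IsLocalization.exists_mk'_eq P.primeCompl z
    have hspec := (IsLocalization.lift_mk'_spec (S := Localization.AtPrime P)
      (g := φ) hφu q 0 s).mp hz
    rw [mul_zero] at hspec
    have hq0 : q = 0 := hinj (by simpa [hφ] using hspec)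
    rw [hq0, IsLocalization.mk'_zero]
  set B : LocalSubring K := LocalSubring.range f with hB
  have hCB : ∀ c : K, c ∈ C → c ∈ B.toSubring := by
    intro c hc
    exact ⟨algebraMap (Polynomial C) _ (Polynomial.C ⟨c, hc⟩), by
      rw [hf, IsLocalization.lift_eq]
      show φ _ = c
      simp only [hφ, AlgHom.toRingHom_eq_coe, RingHom.coe_coe, Polynomial.aeval_C]
      rfl⟩
  have haB : a ∈ B.toSubring :=
    ⟨algebraMap (Polynomial C) _ Polynomial.X, by rw [hf, IsLocalization.lift_eq]; simp [hφ]⟩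
  have hanu : ¬ IsUnit (⟨a, haB⟩ : B.toSubring) := by
    intro h
    obtain ⟨⟨b, hb⟩, he⟩ := isUnit_iff_exists_inv.mp h
    obtain ⟨y, hy⟩ := hb
    have hXa : f (algebraMap (Polynomial C) _ Polynomial.X) = a := by
      rw [hf, IsLocalization.lift_eq]; simp [hφ]
    have h2 : f (algebraMap (Polynomial C) _ Polynomial.X * y) = f 1 := by
      rw [map_mul, hXa, hy, map_one]
      exact congrArg Subtype.val he
    have hX1 : IsUnit (algebraMap (Polynomial C) (Localization.AtPrime P) Polynomial.X) :=
      isUnit_iff_exists_inv.mpr ⟨y, hfinj h2⟩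
    exact (IsLocalization.AtPrime.isUnit_to_map_iff (Localization.AtPrime P) P
      Polynomial.X).mp hX1 (Ideal.subset_span rfl)
  obtain ⟨O, hle, hloc⟩ := B.exists_le_valuationSubring
  have haO : a ∈ O := hle haB
  have hanuO : ¬ IsUnit (⟨a, haO⟩ : ↥O) := fun h => hanu (hloc.1 (⟨a, haB⟩ : B.toSubring) h)
  have hone : ∀ c : K, δ c = 0 → c ≠ 0 → O.valuation c = 1 := by
    intro c hc hc0
    have hcC : c ∈ C := (hmemC c).mpr hc
    have h1 : c ∈ O := hle (hCB c hcC)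
    have h2 : c⁻¹ ∈ O := hle (hCB c⁻¹ (C.inv_mem hcC))
    have : IsUnit (⟨c, h1⟩ : ↥O) :=
      isUnit_iff_exists_inv.mpr ⟨⟨c⁻¹, h2⟩, Subtype.ext (mul_inv_cancel₀ hc0)⟩
    exact (ValuationSubring.valuation_eq_one_iff O ⟨c, h1⟩).mp this
  have hva : O.valuation a < 1 := by
    have : (⟨a, haO⟩ : ↥O) ∈ IsLocalRing.maximalIdeal O :=
      (IsLocalRing.mem_maximalIdeal _).mpr hanuO
    exact (O.valuation_lt_one_iff ⟨a, haO⟩).mp this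
  refine ⟨O, ?_, O.henselianLocalRing_of_isAlgClosed, hone, a, ha0, hva, ?_⟩
  · intro htop
    have hainv : a⁻¹ ∈ O := htop ▸ Subring.mem_top _
    exact hanuO (isUnit_iff_exists_inv.mpr ⟨⟨a⁻¹, hainv⟩, Subtype.ext (mul_inv_cancel₀ ha0)⟩)
  · intro c hc hlt
    by_cases hc0 : c = 0
    · rw [hc0, sub_zero] at hlt
      exact lt_irrefl _ hlt
    · have h1 : O.valuation c = 1 := hone c hc hc0
      have h2 : O.valuation c ≤ max (O.valuation a) (O.valuation (a - c)) :=
        calc O.valuation c = O.valuation (a - (a - c)) := by rw [sub_sub_cancel]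
          _ ≤ _ := O.valuation.map_sub _ _
      have h3 : O.valuation c < 1 :=
        lt_of_le_of_lt h2 (max_lt hva (lt_trans hlt hva))
      rw [h1] at h3
      exact lt_irrefl _ h3
end

section
/- Let (K, v, δ) be a valued-differential field that is henselian as a pure valued field. Suppose K satisfies the axiom scheme (DL) for irreducible differential polynomials: for every irreducible f ∈ K{x} of order n, every ā ∈ K^{n+1} with f_alg(ā) = 0 and s(f)_alg(ā) ≠ 0, and every γ ∈ vK, there exists b ∈ K with f(b) = 0 and v(δ^i(b) − a_i) > γ for all i ≤ n. Then K satisfies (DL) for all (not necessarily irreducible) differential polynomials f ∈ K{x}. -/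
/-!
STATEMENT 12.  `K{x}` is modelled as `MvPolynomial ℕ K` (variable `i` stands for
`x^(i)`), the order of `f` is `f.vars.sup id`, the separant is `pderiv (ord f) f`, and
`f(b) = eval (fun i => δ^[i] b) f`.  Multiplicative valuations: the additive condition
`v(δ^i(b) − a_i) > γ` for `γ ∈ vK` becomes `v (δ^[i] b - a i) < v c` for `c ∈ K^×`, and
henselianity of `(K, v)` is `HenselianLocalRing` of the valuation subring.
-/

open MvPolynomial

-- key auxiliary lemma: degreeOf is additive on products over a field
lemma degreeOf_mul_eq_aux {K : Type*} [Field K] {g h : MvPolynomial ℕ K}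
    (hg : g ≠ 0) (hh : h ≠ 0) (m : ℕ) :
    (g * h).degreeOf m = g.degreeOf m + h.degreeOf m := by
  classical
  obtain ⟨s, q₁, q₂, hq₁, hq₂⟩ := exists_finset_rename₂ g h
  set s' : Finset ℕ := insert m s with hs'
  have hms' : m ∈ s' := Finset.mem_insert_self m s
  have hsub : s ⊆ s' := Finset.subset_insert m s
  set g₁ : MvPolynomial s' K := rename (Set.inclusion hsub) q₁ with hg₁def
  set h₁ : MvPolynomial s' K := rename (Set.inclusion hsub) q₂ with hh₁def
  have hg₁ : g = rename (Subtype.val) g₁ := by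
    rw [hg₁def]; erw [rename_rename]; exact hq₁
  have hh₁ : h = rename (Subtype.val) h₁ := by
    rw [hh₁def]; erw [rename_rename]; exact hq₂
  have hcard : 0 < Fintype.card s' := Fintype.card_pos_iff.mpr ⟨⟨m, hms'⟩⟩
  obtain ⟨n, hn⟩ := Nat.exists_eq_add_of_lt hcard
  have hn' : Fintype.card s' = n + 1 := by omega
  let e₀ : s' ≃ Fin (n + 1) := Fintype.equivFinOfCardEq hn'
  let e : s' ≃ Fin (n + 1) := e₀.trans (Equiv.swap (e₀ ⟨m, hms'⟩) 0)
  have he : e ⟨m, hms'⟩ = 0 := by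
    simp [e, Equiv.swap_apply_left]
  let ι : Fin (n + 1) → ℕ := Subtype.val ∘ e.symm
  have hι : Function.Injective ι :=
    Subtype.val_injective.comp e.symm.injective
  have hι0 : ι 0 = m := by
    simp only [ι, Function.comp_apply, ← he, Equiv.symm_apply_apply]
  have hren : ∀ p : MvPolynomial s' K, rename ι (rename e p) = rename Subtype.val p := by
    intro p
    rw [rename_rename]
    have hfun : ι ∘ ⇑e = (Subtype.val : {x // x ∈ s'} → ℕ) := by
      funext x
      simp [ι, Function.comp_apply, Equiv.symm_apply_apply]
    rw [hfun]
  set G : MvPolynomial (Fin (n + 1)) K := rename e g₁ with hGdef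
  set H : MvPolynomial (Fin (n + 1)) K := rename e h₁ with hHdef
  have hgG : g = rename ι G := by rw [hGdef, hren, hg₁]
  have hhH : h = rename ι H := by rw [hHdef, hren, hh₁]
  have hG0 : G ≠ 0 := by intro hG; exact hg (by rw [hgG, hG, map_zero])
  have hH0 : H ≠ 0 := by intro hHz; exact hh (by rw [hhH, hHz, map_zero])
  have key : ∀ p : MvPolynomial (Fin (n + 1)) K,
      (rename ι p).degreeOf m = p.degreeOf 0 := by
    intro p
    conv_lhs => rw [← hι0]
    exact degreeOf_rename_of_injective hι 0
  have hmul : g * h = rename ι (G * H) := by rw [map_mul, ← hgG, ← hhH]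
  rw [hmul, hgG, hhH, key, key, key]
  rw [← natDegree_finSuccEquiv, ← natDegree_finSuccEquiv, ← natDegree_finSuccEquiv,
    map_mul]
  exact Polynomial.natDegree_mul (by simpa using hG0) (by simpa using hH0)

lemma mem_vars_iff_degreeOf_ne_zero {K : Type*} [CommRing K]
    (p : MvPolynomial ℕ K) (m : ℕ) : m ∈ p.vars ↔ p.degreeOf m ≠ 0 := by
  classical
  rw [vars_def, Multiset.mem_toFinset, degreeOf_def, ← Multiset.count_pos, Nat.pos_iff_ne_zero]

theorem statement12 {K Γ₀ : Type*} [Field K] [CharZero K]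
    [LinearOrderedCommGroupWithZero Γ₀] (v : Valuation K Γ₀)
    (hH : HenselianLocalRing ↥v.valuationSubring)
    (δ : K → K) (hδadd : ∀ x y, δ (x + y) = δ x + δ y)
    (hδmul : ∀ x y, δ (x * y) = δ x * y + x * δ y)
    (hirr : ∀ f : MvPolynomial ℕ K, Irreducible f → ∀ a : ℕ → K,
      eval a f = 0 → eval a (pderiv (dpOrder f) f) ≠ 0 →
      ∀ c : K, c ≠ 0 → ∃ b : K,
        eval (fun i => δ^[i] b) f = 0 ∧
        ∀ i ≤ dpOrder f, v (δ^[i] b - a i) < v c) :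
    ∀ f : MvPolynomial ℕ K, ∀ a : ℕ → K,
      eval a f = 0 → eval a (pderiv (dpOrder f) f) ≠ 0 →
      ∀ c : K, c ≠ 0 → ∃ b : K,
        eval (fun i => δ^[i] b) f = 0 ∧
        ∀ i ≤ dpOrder f, v (δ^[i] b - a i) < v c := by
  intro f
  induction f using WellFounded.induction (wellFounded_dvdNotUnit
    (α := MvPolynomial ℕ K)) with
  | _ f IH =>
  intro a hfa hsa c hc
  by_cases hf_irr : Irreducible f
  · exact hirr f hf_irr a hfa hsa c hc
  -- f is reducible
  have hf0 : f ≠ 0 := by rintro rfl; simp at hsa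
  have hfnu : ¬IsUnit f := by
    intro hu
    exact (hu.map (eval a)).ne_zero hfa
  -- extract a nontrivial factorization
  rw [irreducible_iff] at hf_irr
  push_neg at hf_irr
  obtain ⟨g, h, hfgh, hgu, hhu⟩ := hf_irr hfnu
  -- a general claim handling one factor vanishing
  have main : ∀ g h : MvPolynomial ℕ K, f = g * h → ¬IsUnit h →
      eval a g = 0 → eval a h ≠ 0 → ∃ b : K,
        eval (fun i => δ^[i] b) f = 0 ∧
        ∀ i ≤ dpOrder f, v (δ^[i] b - a i) < v c := by
    intro g h hfgh hhu hga hha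
    have hg0 : g ≠ 0 := by rintro rfl; simp [hfgh] at hf0
    have hh0 : h ≠ 0 := by rintro rfl; simp [hfgh] at hf0
    set n := dpOrder f with hndef
    have hsep : eval a (pderiv n g) ≠ 0 := by
      have : eval a (pderiv n f) =
          eval a (pderiv n g) * eval a h + eval a g * eval a (pderiv n h) := by
        rw [hfgh, pderiv_mul]; simp
      rw [hga, zero_mul, add_zero] at this
      intro h0
      rw [this, h0, zero_mul] at hsa
      exact hsa rfl
    have hpg0 : pderiv n g ≠ 0 := fun h0 => hsep (by rw [h0]; simp)
    -- dpOrder g = n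
    have hle : dpOrder g ≤ n := by
      apply Finset.sup_le
      intro m hm
      have hmf : m ∈ f.vars := by
        rw [_root_.mem_vars_iff_degreeOf_ne_zero] at hm ⊢
        rw [hfgh, degreeOf_mul_eq_aux hg0 hh0]
        omega
      exact Finset.le_sup (f := id) hmf
    have hge : n ≤ dpOrder g := by
      have hmem : n ∈ g.vars := by
        by_contra hnm
        exact hpg0 (pderiv_eq_zero_of_notMem_vars hnm)
      exact Finset.le_sup (f := id) hmem
    have hord : dpOrder g = n := le_antisymm hle hge
    have hdvd : DvdNotUnit g f := ⟨hg0, h, hhu, hfgh⟩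
    obtain ⟨b, hb1, hb2⟩ := IH g hdvd a hga (by rw [hord]; exact hsep) c hc
    refine ⟨b, ?_, ?_⟩
    · rw [hfgh, eval_mul, hb1, zero_mul]
    · intro i hi
      exact hb2 i (by omega)
  -- decide which factor vanishes
  have hgh : eval a g * eval a h = 0 := by rw [← eval_mul, ← hfgh, hfa]
  rcases mul_eq_zero.mp hgh with hga | hha
  · by_cases hha : eval a h = 0
    · -- both vanish: separant would vanish, contradiction
      exfalso
      apply hsa
      rw [hfgh, pderiv_mul]
      simp [hga, hha]
    · exact main g h hfgh hhu hga hha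
  · by_cases hga : eval a g = 0
    · exfalso
      apply hsa
      rw [hfgh, pderiv_mul]
      simp [hga, hha]
    · exact main h g (by rw [hfgh, mul_comm]) hgu hha hga
end
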